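/- arXiv:2201.07071 — 3 statements merged into one kernel-verified Lean document; each statement's English description precedes it below -/
import Mathlib

section
/- Let s, t ≥ 1 be integers. The group H = U_s × U_t acts on the set F^{s×t} of s×t matrices over F by X^{(A,B)} = A⁻¹XB for A ∈ U_s, B ∈ U_t. Then the set of quasimonomial matrices in F^{s×t} is a complete set of orbit representatives for this action; that is, every orbit of H on F^{s×t} contains exactly one quasimonomial matrix. -/
open Matrix

/-- A square matrix is (upper) unitriangular if all entries below the diagonal vanish
and all diagonal entries equal `1`. -/
def IsUnitriangular {n : ℕ} {F : Type*} [Field F] (A : Matrix (Fin n) (Fin n) F) : Prop :=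
  (∀ i j : Fin n, j < i → A i j = 0) ∧ ∀ i : Fin n, A i i = 1

theorem IsUnitriangular.mul {n : ℕ} {F : Type*} [Field F]
    {A B : Matrix (Fin n) (Fin n) F}
    (hA : IsUnitriangular A) (hB : IsUnitriangular B) : IsUnitriangular (A * B) := by
  constructor
  · intro i j hij
    rw [Matrix.mul_apply]
    apply Finset.sum_eq_zero
    intro m _
    rcases lt_or_ge m i with h | h
    · rw [hA.1 i m h, zero_mul]
    · rw [hB.1 m j (lt_of_lt_of_le hij h), mul_zero]
  · intro i
    rw [Matrix.mul_apply, Finset.sum_eq_single i]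
    · rw [hA.2, hB.2, one_mul]
    · intro m _ hm
      rcases lt_or_gt_of_ne hm with h | h
      · rw [hA.1 i m h, zero_mul]
      · rw [hB.1 m i h, mul_zero]
    · intro h
      exact absurd (Finset.mem_univ i) h

theorem IsUnitriangular.inv {n : ℕ} {F : Type*} [Field F] {A : GL (Fin n) F}
    (hA : IsUnitriangular (A : Matrix (Fin n) (Fin n) F)) :
    IsUnitriangular ((A⁻¹ : GL (Fin n) F) : Matrix (Fin n) (Fin n) F) := by
  letI := A.invertible
  have hBT : Matrix.BlockTriangular (A : Matrix (Fin n) (Fin n) F) id := fun i j h => hA.1 i j h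
  have hBTinv : Matrix.BlockTriangular ((A : Matrix (Fin n) (Fin n) F)⁻¹) id :=
    Matrix.blockTriangular_inv_of_blockTriangular hBT
  have hcoe : ((A⁻¹ : GL (Fin n) F) : Matrix (Fin n) (Fin n) F)
      = ((A : Matrix (Fin n) (Fin n) F)⁻¹) := Matrix.coe_units_inv A
  constructor
  · intro i j hij
    rw [hcoe]
    exact hBTinv hij
  · intro i
    have hmul : (A : Matrix (Fin n) (Fin n) F) * ((A⁻¹ : GL (Fin n) F) : Matrix (Fin n) (Fin n) F)
        = 1 := by
      rw [← Units.val_mul, mul_inv_cancel, Units.val_one]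
    have h1 : ((A : Matrix (Fin n) (Fin n) F)
        * ((A⁻¹ : GL (Fin n) F) : Matrix (Fin n) (Fin n) F)) i i = 1 := by
      rw [hmul, Matrix.one_apply_eq]
    rw [Matrix.mul_apply, Finset.sum_eq_single i] at h1
    · rw [hA.2 i, one_mul] at h1
      exact h1
    · intro m _ hm
      rcases lt_or_gt_of_ne hm with h | h
      · rw [hA.1 i m h, zero_mul]
      · rw [hcoe, hBTinv h, mul_zero]
    · intro h
      exact absurd (Finset.mem_univ i) h

/-- `UT F n` is the subgroup of `GL (Fin n) F` of upper unitriangular matrices,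
i.e. the group `U_n` of the paper. -/
def UT (F : Type*) [Field F] (n : ℕ) : Subgroup (GL (Fin n) F) where
  carrier := {A | IsUnitriangular (A : Matrix (Fin n) (Fin n) F)}
  one_mem' := by
    constructor
    · intro i j hij
      show (1 : GL (Fin n) F).val i j = 0
      rw [Units.val_one]
      exact Matrix.one_apply_ne hij.ne'
    · intro i
      show (1 : GL (Fin n) F).val i i = 1
      rw [Units.val_one]
      exact Matrix.one_apply_eq i
  mul_mem' := by
    intro A B hA hB
    show IsUnitriangular ((A * B : GL (Fin n) F) : Matrix (Fin n) (Fin n) F)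
    rw [Units.val_mul]
    exact IsUnitriangular.mul hA hB
  inv_mem' := by
    intro A hA
    exact IsUnitriangular.inv hA

/-- The full triviality of a column: combined with unitriangularity, vanishing above the
diagonal in a column means the column is a standard basis vector. -/
theorem trivial_col {n : ℕ} {F : Type*} [Field F] {A : Matrix (Fin n) (Fin n) F}
    (h1 : IsUnitriangular A) {c : Fin n}
    (h2 : ∀ k : Fin n, k < c → A k c = 0) {m : Fin n} (hm : m ≠ c) : A m c = 0 := by
  rcases lt_or_gt_of_ne hm with h | h
  · exact h2 m h
  · exact h1.1 m c h

/-- `Pcol F n i` is the subgroup `P_{n,i}` of `U_n` (inside `GL (Fin n) F`): unitriangular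
matrices whose `i`-th column (`1`-based) is trivial. -/
def Pcol (F : Type*) [Field F] (n : ℕ) (i : ℕ) : Subgroup (GL (Fin n) F) where
  carrier := {A | IsUnitriangular (A : Matrix (Fin n) (Fin n) F) ∧
    ∀ k c : Fin n, (c : ℕ) + 1 = i → k < c → (A : Matrix (Fin n) (Fin n) F) k c = 0}
  one_mem' := by
    refine ⟨(UT F n).one_mem, ?_⟩
    intro k c _ hk
    show (1 : GL (Fin n) F).val k c = 0
    rw [Units.val_one]
    exact Matrix.one_apply_ne hk.ne
  mul_mem' := by
    rintro A B ⟨hA1, hA2⟩ ⟨hB1, hB2⟩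
    refine ⟨(UT F n).mul_mem hA1 hB1, ?_⟩
    intro k c hc hk
    show ((A * B : GL (Fin n) F) : Matrix (Fin n) (Fin n) F) k c = 0
    rw [Units.val_mul, Matrix.mul_apply, Finset.sum_eq_single c]
    · rw [hA2 k c hc hk, zero_mul]
    · intro m _ hm
      rw [trivial_col hB1 (fun k' hk' => hB2 k' c hc hk') hm, mul_zero]
    · intro h
      exact absurd (Finset.mem_univ c) h
  inv_mem' := by
    rintro A ⟨hA1, hA2⟩
    refine ⟨IsUnitriangular.inv hA1, ?_⟩
    intro k c hc hk
    have hBA : ((A⁻¹ : GL (Fin n) F) : Matrix (Fin n) (Fin n) F)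
        * (A : Matrix (Fin n) (Fin n) F) = 1 := by
      rw [← Units.val_mul, inv_mul_cancel, Units.val_one]
    have h0 : (((A⁻¹ : GL (Fin n) F) : Matrix (Fin n) (Fin n) F)
        * (A : Matrix (Fin n) (Fin n) F)) k c = 0 := by
      rw [hBA]
      exact Matrix.one_apply_ne hk.ne
    rw [Matrix.mul_apply, Finset.sum_eq_single c] at h0
    · rw [hA1.2 c, mul_one] at h0
      exact h0
    · intro m _ hm
      rw [trivial_col hA1 (fun k' hk' => hA2 k' c hc hk') hm, mul_zero]
    · intro h
      exact absurd (Finset.mem_univ c) h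

/-- `Qcol F n i j` is the subgroup `Q_{n,i,j}` of `U_n` (inside `GL (Fin n) F`), for `1`-based
indices `i < j`: unitriangular matrices `A` with `A_{y,i} = 0` for `y < i` and `A_{x,j} = 0`
for `x < j`, `x ≠ i`. -/
def Qcol (F : Type*) [Field F] (n : ℕ) (i j : ℕ) : Subgroup (GL (Fin n) F) where
  carrier := {A | IsUnitriangular (A : Matrix (Fin n) (Fin n) F) ∧
    (∀ y c : Fin n, (c : ℕ) + 1 = i → (y : ℕ) + 1 < i →
      (A : Matrix (Fin n) (Fin n) F) y c = 0) ∧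
    (∀ x c : Fin n, (c : ℕ) + 1 = j → (x : ℕ) + 1 < j → (x : ℕ) + 1 ≠ i →
      (A : Matrix (Fin n) (Fin n) F) x c = 0)}
  one_mem' := by
    refine ⟨(UT F n).one_mem, ?_, ?_⟩
    · intro y c hc hy
      show (1 : GL (Fin n) F).val y c = 0
      rw [Units.val_one]
      refine Matrix.one_apply_ne fun h => ?_
      rw [h] at hy
      omega
    · intro x c hc hx _
      show (1 : GL (Fin n) F).val x c = 0
      rw [Units.val_one]
      refine Matrix.one_apply_ne fun h => ?_
      rw [h] at hx
      omega
  mul_mem' := by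
    rintro A B ⟨hA1, hA2, hA3⟩ ⟨hB1, hB2, hB3⟩
    have colI : ∀ (M : Matrix (Fin n) (Fin n) F), IsUnitriangular M →
        (∀ y c : Fin n, (c : ℕ) + 1 = i → (y : ℕ) + 1 < i → M y c = 0) →
        ∀ y c : Fin n, (c : ℕ) + 1 = i → y ≠ c → M y c = 0 := by
      intro M hM1 hM2 y c hc hy
      rcases lt_or_gt_of_ne hy with h | h
      · have h' : (y : ℕ) < (c : ℕ) := h
        exact hM2 y c hc (by omega)
      · exact hM1.1 y c h
    have colJ : ∀ (M : Matrix (Fin n) (Fin n) F), IsUnitriangular M →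
        (∀ x c : Fin n, (c : ℕ) + 1 = j → (x : ℕ) + 1 < j → (x : ℕ) + 1 ≠ i → M x c = 0) →
        ∀ x c : Fin n, (c : ℕ) + 1 = j → x ≠ c → (x : ℕ) + 1 ≠ i → M x c = 0 := by
      intro M hM1 hM3 x c hc hx hxi
      rcases lt_or_gt_of_ne hx with h | h
      · have h' : (x : ℕ) < (c : ℕ) := h
        exact hM3 x c hc (by omega) hxi
      · exact hM1.1 x c h
    refine ⟨(UT F n).mul_mem hA1 hB1, ?_, ?_⟩
    · intro y c hc hy
      show ((A * B : GL (Fin n) F) : Matrix (Fin n) (Fin n) F) y c = 0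
      rw [Units.val_mul, Matrix.mul_apply, Finset.sum_eq_single c]
      · rw [hA2 y c hc hy, zero_mul]
      · intro m _ hm
        rw [colI _ hB1 hB2 m c hc hm, mul_zero]
      · intro h
        exact absurd (Finset.mem_univ c) h
    · intro x c hc hx hxi
      show ((A * B : GL (Fin n) F) : Matrix (Fin n) (Fin n) F) x c = 0
      rw [Units.val_mul, Matrix.mul_apply]
      apply Finset.sum_eq_zero
      intro m _
      by_cases hmi : (m : ℕ) + 1 = i
      · have hxm : x ≠ m := fun h => hxi (by rw [h]; exact hmi)
        rw [colI _ hA1 hA2 x m hmi hxm, zero_mul]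
      · by_cases hmc : m = c
        · subst hmc
          rw [hA3 x m hc hx hxi, zero_mul]
        · rw [colJ _ hB1 hB3 m c hc hmc hmi, mul_zero]
  inv_mem' := by
    rintro A ⟨hA1, hA2, hA3⟩
    have colI : ∀ y c : Fin n, (c : ℕ) + 1 = i → y ≠ c →
        (A : Matrix (Fin n) (Fin n) F) y c = 0 := by
      intro y c hc hy
      rcases lt_or_gt_of_ne hy with h | h
      · have h' : (y : ℕ) < (c : ℕ) := h
        exact hA2 y c hc (by omega)
      · exact hA1.1 y c h
    have colJ : ∀ x c : Fin n, (c : ℕ) + 1 = j → x ≠ c → (x : ℕ) + 1 ≠ i →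
        (A : Matrix (Fin n) (Fin n) F) x c = 0 := by
      intro x c hc hx hxi
      rcases lt_or_gt_of_ne hx with h | h
      · have h' : (x : ℕ) < (c : ℕ) := h
        exact hA3 x c hc (by omega) hxi
      · exact hA1.1 x c h
    have hBA : ((A⁻¹ : GL (Fin n) F) : Matrix (Fin n) (Fin n) F)
        * (A : Matrix (Fin n) (Fin n) F) = 1 := by
      rw [← Units.val_mul, inv_mul_cancel, Units.val_one]
    have hBcolI : ∀ y c : Fin n, (c : ℕ) + 1 = i → y ≠ c →
        ((A⁻¹ : GL (Fin n) F) : Matrix (Fin n) (Fin n) F) y c = 0 := by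
      intro y c hc hy
      have h0 : (((A⁻¹ : GL (Fin n) F) : Matrix (Fin n) (Fin n) F)
          * (A : Matrix (Fin n) (Fin n) F)) y c = 0 := by
        rw [hBA]
        exact Matrix.one_apply_ne hy
      rw [Matrix.mul_apply, Finset.sum_eq_single c] at h0
      · rw [hA1.2 c, mul_one] at h0
        exact h0
      · intro m _ hm
        rw [colI m c hc hm, mul_zero]
      · intro h
        exact absurd (Finset.mem_univ c) h
    refine ⟨IsUnitriangular.inv hA1, ?_, ?_⟩
    · intro y c hc hy
      refine hBcolI y c hc fun h => ?_
      rw [h] at hy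
      omega
    · intro x c hc hx hxi
      have hxc : x ≠ c := fun h => by rw [h] at hx; omega
      have h0 : (((A⁻¹ : GL (Fin n) F) : Matrix (Fin n) (Fin n) F)
          * (A : Matrix (Fin n) (Fin n) F)) x c = 0 := by
        rw [hBA]
        exact Matrix.one_apply_ne hxc
      rw [Matrix.mul_apply, Finset.sum_eq_single c] at h0
      · rw [hA1.2 c, mul_one] at h0
        exact h0
      · intro m _ hm
        by_cases hmi : (m : ℕ) + 1 = i
        · have hxm : x ≠ m := fun h => hxi (by rw [h]; exact hmi)
          rw [hBcolI x m hmi hxm, zero_mul]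
        · rw [colJ m c hc hm hmi, mul_zero]
      · intro h
        exact absurd (Finset.mem_univ c) h

/-- `f : G → ℂ` is an irreducible (complex) character of `G` if it is the character of some
irreducible (= simple) finite-dimensional complex representation of `G`. -/
def IsIrrChar {G : Type} [Group G] (f : G → ℂ) : Prop :=
  ∃ V : FDRep ℂ G, CategoryTheory.Simple V ∧ f = fun g => FDRep.character V g

/-- `Nk G k` is the number `N_k(G)` of irreducible complex characters of `G` of degree `k`
(recall that the degree of a character `χ` is `χ(1)`). -/
noncomputable def Nk (G : Type) [Group G] (k : ℕ) : ℕ :=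
  Set.ncard {f : G → ℂ | IsIrrChar f ∧ f 1 = (k : ℂ)}

/-- A matrix is quasimonomial if it has at most one nonzero entry in every row and in
every column. -/
def Quasimonomial {s t : ℕ} {F : Type*} [Field F] (T : Matrix (Fin s) (Fin t) F) : Prop :=
  (∀ (i : Fin s) (j j' : Fin t), T i j ≠ 0 → T i j' ≠ 0 → j = j') ∧
  (∀ (i i' : Fin s) (j : Fin t), T i j ≠ 0 → T i' j ≠ 0 → i = i')

section Aux
variable {F : Type*} [Field F]

lemma isUnitriangular_one {n : ℕ} : IsUnitriangular (1 : Matrix (Fin n) (Fin n) F) :=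
  ⟨fun _ _ h => Matrix.one_apply_ne h.ne', fun i => Matrix.one_apply_eq i⟩

lemma IsUnitriangular.submatrix'' {m n : ℕ} {A : Matrix (Fin n) (Fin n) F}
    (hA : IsUnitriangular A) {f : Fin m → Fin n} (hf : StrictMono f) :
    IsUnitriangular (A.submatrix f f) :=
  ⟨fun _ _ h => hA.1 _ _ (hf h), fun i => hA.2 (f i)⟩

lemma Quasimonomial.submatrix'' {s t s' t' : ℕ} {T : Matrix (Fin s) (Fin t) F}
    (hT : Quasimonomial T) {f : Fin s' → Fin s} {g : Fin t' → Fin t}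
    (hf : Function.Injective f) (hg : Function.Injective g) :
    Quasimonomial (T.submatrix f g) :=
  ⟨fun i j j' h h' => hg (hT.1 (f i) (g j) (g j') h h'),
   fun i i' j h h' => hf (hT.2 (f i) (f i') (g j) h h')⟩

end Aux

section Uniq
variable {F : Type*} [Field F]

lemma quasi_uniq : ∀ (n s t : ℕ), s + t ≤ n →
    ∀ (A : Matrix (Fin s) (Fin s) F) (B : Matrix (Fin t) (Fin t) F)
      (T : Matrix (Fin s) (Fin t) F),
      IsUnitriangular A → IsUnitriangular B → Quasimonomial T →
      Quasimonomial (A * T * B) → A * T * B = T := by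
  intro n
  induction n with
  | zero =>
    intro s t hst A B T _ _ _ _
    ext i j
    exact absurd i.isLt (by omega)
  | succ n ih =>
    intro s t hst A B T hA hB hT hT'
    rcases s with _ | s'
    · ext i j; exact i.elim0
    rcases t with _ | t'
    · ext i j; exact j.elim0
    -- column restriction
    have keyc : ∀ (i : Fin (s' + 1)) (l : Fin t'),
        (A * T * B) i (Fin.castSucc l)
          = (A * (T.submatrix id Fin.castSucc)
              * (B.submatrix Fin.castSucc Fin.castSucc)) i l := by
      intro i l
      rw [Matrix.mul_apply, Matrix.mul_apply, Fin.sum_univ_castSucc,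
        hB.1 (Fin.last t') (Fin.castSucc l) (Fin.castSucc_lt_last l), mul_zero, add_zero]
      refine Finset.sum_congr rfl fun m _ => ?_
      simp [Matrix.mul_apply]
    have hcol : ∀ (i : Fin (s' + 1)) (l : Fin t'),
        (A * T * B) i (Fin.castSucc l) = T i (Fin.castSucc l) := by
      have e : (A * T * B).submatrix id Fin.castSucc
          = A * (T.submatrix id Fin.castSucc) * (B.submatrix Fin.castSucc Fin.castSucc) := by
        ext i l; exact keyc i l
      have hq2 : Quasimonomial (A * (T.submatrix id Fin.castSucc)
          * (B.submatrix Fin.castSucc Fin.castSucc)) := by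
        rw [← e]
        exact hT'.submatrix'' Function.injective_id (Fin.castSucc_injective t')
      have hr := ih (s' + 1) t' (by omega) A (B.submatrix Fin.castSucc Fin.castSucc)
        (T.submatrix id Fin.castSucc) hA (hB.submatrix'' Fin.strictMono_castSucc)
        (hT.submatrix'' Function.injective_id (Fin.castSucc_injective t')) hq2
      intro i l
      rw [keyc i l, hr]
      rfl
    -- row restriction
    have keyr : ∀ (k : Fin s') (j : Fin (t' + 1)),
        (A * T * B) (Fin.succ k) j
          = ((A.submatrix Fin.succ Fin.succ) * (T.submatrix Fin.succ id) * B) k j := by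
      intro k j
      rw [Matrix.mul_apply, Matrix.mul_apply]
      refine Finset.sum_congr rfl fun m _ => ?_
      congr 1
      rw [Matrix.mul_apply, Matrix.mul_apply, Fin.sum_univ_succ,
        hA.1 (Fin.succ k) 0 (Fin.succ_pos k), zero_mul, zero_add]
      simp
    have hrow : ∀ (k : Fin s') (j : Fin (t' + 1)),
        (A * T * B) (Fin.succ k) j = T (Fin.succ k) j := by
      have e : (A * T * B).submatrix Fin.succ id
          = (A.submatrix Fin.succ Fin.succ) * (T.submatrix Fin.succ id) * B := by
        ext k j; exact keyr k j
      have hq2 : Quasimonomial ((A.submatrix Fin.succ Fin.succ)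
          * (T.submatrix Fin.succ id) * B) := by
        rw [← e]
        exact hT'.submatrix'' (Fin.succ_injective s') Function.injective_id
      have hr := ih s' (t' + 1) (by omega) (A.submatrix Fin.succ Fin.succ) B
        (T.submatrix Fin.succ id) (hA.submatrix'' Fin.strictMono_succ) hB
        (hT.submatrix'' (Fin.succ_injective s') Function.injective_id) hq2
      intro k j
      rw [keyr k j, hr]
      rfl
    set i0 : Fin (s' + 1) := 0 with hi0def
    set J : Fin (t' + 1) := Fin.last t' with hJdef
    have hoff : ∀ (i : Fin (s' + 1)) (j : Fin (t' + 1)), i ≠ i0 ∨ j ≠ J →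
        (A * T * B) i j = T i j := by
      rintro i j (hi | hj)
      · obtain ⟨k, rfl⟩ := Fin.exists_succ_eq_of_ne_zero hi
        exact hrow k j
      · obtain ⟨l, rfl⟩ := Fin.exists_castSucc_eq.mpr hj
        exact hcol i l
    suffices hcorner : (A * T * B) i0 J = T i0 J by
      ext i j
      by_cases hi : i = i0
      · by_cases hj : j = J
        · rw [hi, hj]; exact hcorner
        · exact hoff i j (Or.inr hj)
      · exact hoff i j (Or.inl hi)
    by_cases hr1 : ∃ l, l ≠ J ∧ T i0 l ≠ 0
    · obtain ⟨l, hlJ, hl⟩ := hr1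
      have hTc : T i0 J = 0 := by
        by_contra h
        exact hlJ (hT.1 i0 J l h hl).symm
      have hT'c : (A * T * B) i0 J = 0 := by
        by_contra h
        have h2 : (A * T * B) i0 l ≠ 0 := by
          rw [hoff i0 l (Or.inr hlJ)]; exact hl
        exact hlJ (hT'.1 i0 J l h h2).symm
      rw [hTc, hT'c]
    by_cases hc1 : ∃ k, k ≠ i0 ∧ T k J ≠ 0
    · obtain ⟨k, hki, hk⟩ := hc1
      have hTc : T i0 J = 0 := by
        by_contra h
        exact hki (hT.2 k i0 J hk h)
      have hT'c : (A * T * B) i0 J = 0 := by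
        by_contra h
        have h2 : (A * T * B) k J ≠ 0 := by
          rw [hoff k J (Or.inl hki)]; exact hk
        exact hki (hT'.2 k i0 J h2 h)
      rw [hTc, hT'c]
    push_neg at hr1 hc1
    set u : Fin (t' + 1) → F := fun m => ∑ k, A i0 k * T k m with hu
    have hT'i0 : ∀ j, (A * T * B) i0 j = ∑ m, u m * B m j := by
      intro j
      rw [Matrix.mul_apply]
      refine Finset.sum_congr rfl fun m _ => ?_
      rw [Matrix.mul_apply]
    have huJ : u J = T i0 J := by
      show (∑ k, A i0 k * T k J) = T i0 J
      rw [Finset.sum_eq_single i0]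
      · rw [hA.2, MulOneClass.one_mul]
      · intro k _ hk
        rw [hc1 k hk, MulZeroClass.mul_zero]
      · exact fun h => absurd (Finset.mem_univ i0) h
    have hu0 : ∀ l, l ≠ J → u l = 0 := by
      suffices key : ∀ (N : ℕ) (l : Fin (t' + 1)), (l : ℕ) < N → l ≠ J → u l = 0 by
        exact fun l hl => key ((l : ℕ) + 1) l (Nat.lt_succ_self _) hl
      intro N
      induction N with
      | zero => exact fun l hl _ => absurd hl (by omega)
      | succ N ihN =>
        intro l hlN hlJ
        have h0 : (∑ m, u m * B m l) = 0 := by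
          rw [← hT'i0 l, hoff i0 l (Or.inr hlJ)]
          exact hr1 l hlJ
        rw [Finset.sum_eq_single l] at h0
        · rwa [hB.2, MulOneClass.mul_one] at h0
        · intro m _ hm
          rcases lt_or_gt_of_ne hm with h | h
          · have hml : (m : ℕ) < (l : ℕ) := h
            have hmJ : m ≠ J := ne_of_lt (lt_of_lt_of_le h (Fin.le_last l))
            rw [ihN m (by omega) hmJ, MulZeroClass.zero_mul]
          · rw [hB.1 m l h, MulZeroClass.mul_zero]
        · exact fun h => absurd (Finset.mem_univ l) h
    rw [hT'i0 J, Finset.sum_eq_single J]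
    · rw [hB.2, mul_one, huJ]
    · intro m _ hm
      rw [hu0 m hm, MulZeroClass.zero_mul]
    · exact fun h => absurd (Finset.mem_univ J) h

end Uniq

section Exist
variable {F : Type*} [Field F]

/-- Extend an `n × n` matrix to an `(n+1) × (n+1)` matrix by adding a trivial last
row and column. -/
def extC {n : ℕ} (C' : Matrix (Fin n) (Fin n) F) : Matrix (Fin (n + 1)) (Fin (n + 1)) F :=
  fun i j =>
    if hi : (i : ℕ) < n then
      (if hj : (j : ℕ) < n then C' ⟨i, hi⟩ ⟨j, hj⟩ else 0)
    else if i = j then 1 else 0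

lemma extC_castSucc {n : ℕ} (C' : Matrix (Fin n) (Fin n) F) (i j : Fin n) :
    extC C' (Fin.castSucc i) (Fin.castSucc j) = C' i j := by
  show (if hi : ((Fin.castSucc i : Fin (n+1)) : ℕ) < n then _ else _) = C' i j
  rw [dif_pos (show ((Fin.castSucc i : Fin (n+1)) : ℕ) < n from i.isLt)]
  rw [dif_pos (show ((Fin.castSucc j : Fin (n+1)) : ℕ) < n from j.isLt)]
  simp

lemma extC_castSucc_last {n : ℕ} (C' : Matrix (Fin n) (Fin n) F) (i : Fin n) :
    extC C' (Fin.castSucc i) (Fin.last n) = 0 := by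
  show (if hi : ((Fin.castSucc i : Fin (n+1)) : ℕ) < n then _ else _) = 0
  rw [dif_pos (show ((Fin.castSucc i : Fin (n+1)) : ℕ) < n from i.isLt)]
  rw [dif_neg (show ¬ ((Fin.last n : Fin (n+1)) : ℕ) < n from by simp)]

lemma extC_last {n : ℕ} (C' : Matrix (Fin n) (Fin n) F) (j : Fin (n + 1)) :
    extC C' (Fin.last n) j = if Fin.last n = j then 1 else 0 := by
  show (if hi : ((Fin.last n : Fin (n+1)) : ℕ) < n then _ else _) = _
  rw [dif_neg (show ¬ ((Fin.last n : Fin (n+1)) : ℕ) < n from by simp)]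

lemma extC_unitri {n : ℕ} {C' : Matrix (Fin n) (Fin n) F} (hC' : IsUnitriangular C') :
    IsUnitriangular (extC C') := by
  constructor
  · intro i j hji
    by_cases hi : (i : ℕ) < n
    · have hj : (j : ℕ) < n := lt_trans hji hi
      show (if hi' : (i : ℕ) < n then _ else _) = (0 : F)
      rw [dif_pos hi, dif_pos hj]
      exact hC'.1 ⟨i, hi⟩ ⟨j, hj⟩ hji
    · show (if hi' : (i : ℕ) < n then _ else _) = (0 : F)
      rw [dif_neg hi, if_neg (ne_of_gt hji)]
  · intro i
    by_cases hi : (i : ℕ) < n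
    · show (if hi' : (i : ℕ) < n then _ else _) = (1 : F)
      rw [dif_pos hi, dif_pos hi]
      exact hC'.2 ⟨i, hi⟩
    · show (if hi' : (i : ℕ) < n then _ else _) = (1 : F)
      rw [dif_neg hi, if_pos rfl]

lemma extC_mul_castSucc {n t : ℕ} (C' : Matrix (Fin n) (Fin n) F)
    (Y : Matrix (Fin (n + 1)) (Fin t) F) (i : Fin n) (j : Fin t) :
    (extC C' * Y) (Fin.castSucc i) j = (C' * Y.submatrix Fin.castSucc id) i j := by
  rw [Matrix.mul_apply, Matrix.mul_apply, Fin.sum_univ_castSucc, extC_castSucc_last,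
    MulZeroClass.zero_mul, add_zero]
  exact Finset.sum_congr rfl fun k _ => by rw [extC_castSucc]; rfl

lemma extC_mul_last {n t : ℕ} (C' : Matrix (Fin n) (Fin n) F)
    (Y : Matrix (Fin (n + 1)) (Fin t) F) (j : Fin t) :
    (extC C' * Y) (Fin.last n) j = Y (Fin.last n) j := by
  rw [Matrix.mul_apply, Fin.sum_univ_castSucc]
  rw [Finset.sum_eq_zero fun k _ => by
    rw [extC_last, if_neg (Fin.castSucc_lt_last k).ne', MulZeroClass.zero_mul]]
  rw [extC_last, if_pos rfl, MulOneClass.one_mul, zero_add]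

lemma quasi_exist {t : ℕ} : ∀ (s : ℕ) (X : Matrix (Fin s) (Fin t) F) (Z : Set (Fin t)),
    (∀ j ∈ Z, ∀ i, X i j = 0) →
    ∃ (C : Matrix (Fin s) (Fin s) F) (B : Matrix (Fin t) (Fin t) F),
      IsUnitriangular C ∧ IsUnitriangular B ∧
      (∀ m j, m ≠ j → (m ∈ Z ∨ j ∈ Z) → B m j = 0) ∧
      Quasimonomial (C * X * B) := by
  classical
  intro s
  induction s with
  | zero =>
    intro X Z _
    exact ⟨1, 1, isUnitriangular_one, isUnitriangular_one,
      fun m j hmj _ => Matrix.one_apply_ne hmj,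
      fun i => i.elim0, fun i => i.elim0⟩
  | succ s' ih =>
    intro X Z hZ
    by_cases hlast : ∀ j, X (Fin.last s') j = 0
    · -- last row is zero
      obtain ⟨C', B, hC', hB, hBZ, hq⟩ :=
        ih (X.submatrix Fin.castSucc id) Z (fun j hj i => hZ j hj _)
      refine ⟨extC C', B, extC_unitri hC', hB, hBZ, ?_⟩
      have hTrow : ∀ (i' : Fin s') j,
          (extC C' * X * B) (Fin.castSucc i') j
            = (C' * X.submatrix Fin.castSucc id * B) i' j := by
        intro i' j
        rw [Matrix.mul_apply, Matrix.mul_apply]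
        exact Finset.sum_congr rfl fun m _ => by rw [extC_mul_castSucc]
      have hTlast : ∀ j, (extC C' * X * B) (Fin.last s') j = 0 := by
        intro j
        rw [Matrix.mul_apply]
        exact Finset.sum_eq_zero fun m _ => by
          rw [extC_mul_last, hlast m, MulZeroClass.zero_mul]
      constructor
      · intro i j j' hj hj'
        rcases Fin.eq_castSucc_or_eq_last i with ⟨a, rfl⟩ | rfl
        · rw [hTrow] at hj hj'
          exact hq.1 a j j' hj hj'
        · exact absurd (hTlast j) hj
      · intro i i' j hi hi'
        rcases Fin.eq_castSucc_or_eq_last i with ⟨a, rfl⟩ | rfl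
        · rcases Fin.eq_castSucc_or_eq_last i' with ⟨b, rfl⟩ | rfl
          · rw [hTrow] at hi hi'
            rw [hq.2 a b j hi hi']
          · exact absurd (hTlast j) hi'
        · exact absurd (hTlast j) hi
    · -- there is a pivot in the last row
      push_neg at hlast
      set S : Finset (Fin t) := Finset.univ.filter (fun j => X (Fin.last s') j ≠ 0) with hS
      have hSne : S.Nonempty := by
        obtain ⟨j, hj⟩ := hlast
        exact ⟨j, by simp [hS, hj]⟩
      set j0 : Fin t := S.min' hSne with hj0def
      have hj0 : X (Fin.last s') j0 ≠ 0 := by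
        have h : j0 ∈ S := S.min'_mem hSne
        rw [hS, Finset.mem_filter] at h
        exact h.2
      have hmin : ∀ j, j < j0 → X (Fin.last s') j = 0 := by
        intro j hj
        by_contra h
        exact absurd (S.min'_le j (by simp [hS, h])) (not_le.mpr hj)
      set c : F := X (Fin.last s') j0 with hcdef
      have hc : c ≠ 0 := hj0
      have hj0Z : j0 ∉ Z := fun h => hj0 (hZ j0 h _)
      -- column operations clearing the last row to the right of j0
      set B0 : Matrix (Fin t) (Fin t) F := fun m j =>
        if m = j then 1 else if m = j0 ∧ j0 < j then -(X (Fin.last s') j) / c else 0 with hB0def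
      have hB0tri : IsUnitriangular B0 := by
        constructor
        · intro i j hji
          show (if i = j then (1:F) else if i = j0 ∧ j0 < j then _ else 0) = 0
          rw [if_neg (ne_of_gt hji), if_neg ?_]
          rintro ⟨rfl, h'⟩
          exact absurd (h'.trans hji) (lt_irrefl _)
        · intro i
          show (if i = i then (1:F) else _) = 1
          rw [if_pos rfl]
      have hB0Z : ∀ m j, m ≠ j → (m ∈ Z ∨ j ∈ Z) → B0 m j = 0 := by
        intro m j hmj h
        show (if m = j then (1:F) else if m = j0 ∧ j0 < j then _ else 0) = 0
        rw [if_neg hmj]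
        rcases h with hm | hj
        · rw [if_neg ?_]
          rintro ⟨rfl, _⟩
          exact hj0Z hm
        · by_cases h' : m = j0 ∧ j0 < j
          · rw [if_pos h', hZ j hj (Fin.last s'), neg_zero, zero_div]
          · rw [if_neg h']
      have hXB0 : ∀ i j, (X * B0) i j
          = X i j + (if j0 < j then X i j0 * (-(X (Fin.last s') j) / c) else 0) := by
        intro i j
        rw [Matrix.mul_apply]
        have e : ∀ m : Fin t, X i m * B0 m j
            = (if m = j then X i m else 0)
              + (if m = j0 then (if j0 < j then X i m * (-(X (Fin.last s') j) / c) else 0)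
                  else 0) := by
          intro m
          show X i m * (if m = j then (1:F) else if m = j0 ∧ j0 < j then _ else 0) = _
          by_cases h1 : m = j
          · subst h1
            by_cases h2 : m = j0
            · subst h2
              rw [if_pos rfl, if_pos rfl, if_pos rfl, if_neg (lt_irrefl _), add_zero,
                MulOneClass.mul_one]
            · rw [if_pos rfl, if_pos rfl, if_neg h2, add_zero, MulOneClass.mul_one]
          · by_cases h2 : m = j0
            · subst h2
              rw [if_neg h1, if_pos rfl, if_neg h1, zero_add]
              by_cases h3 : j0 < j
              · rw [if_pos ⟨rfl, h3⟩, if_pos h3]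
              · rw [if_neg (fun hh => h3 hh.2), if_neg h3, MulZeroClass.mul_zero]
            · rw [if_neg h1, if_neg (fun hh => h2 hh.1), if_neg h1, if_neg h2,
                MulZeroClass.mul_zero, add_zero]
        rw [Finset.sum_congr rfl fun m _ => e m, Finset.sum_add_distrib,
          Finset.sum_ite_eq' Finset.univ j (fun m => X i m),
          Finset.sum_ite_eq' Finset.univ j0
            (fun m => if j0 < j then X i m * (-(X (Fin.last s') j) / c) else 0),
          if_pos (Finset.mem_univ j), if_pos (Finset.mem_univ j0)]
      have hrowB0 : ∀ j, (X * B0) (Fin.last s') j = if j = j0 then c else 0 := by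
        intro j
        rw [hXB0]
        rcases lt_trichotomy j j0 with h | h | h
        · rw [hmin j h, if_neg (asymm h), add_zero, if_neg (ne_of_lt h)]
        · subst h
          rw [if_neg (lt_irrefl _), add_zero, if_pos rfl]
        · rw [if_pos h, if_neg (ne_of_gt h), ← hcdef, mul_comm, div_mul_cancel₀ _ hc,
            add_neg_cancel]
      have hZB0 : ∀ j ∈ Z, ∀ i, (X * B0) i j = 0 := by
        intro j hj i
        rw [hXB0, hZ j hj i, hZ j hj (Fin.last s'), neg_zero, zero_div,
          MulZeroClass.mul_zero]
        simp
      -- row operations clearing the column j0 above the last row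
      set C0 : Matrix (Fin (s' + 1)) (Fin (s' + 1)) F := fun i k =>
        if i = k then 1
        else if k = Fin.last s' ∧ i ≠ Fin.last s' then -((X * B0) i j0) / c else 0 with hC0def
      have hC0tri : IsUnitriangular C0 := by
        constructor
        · intro i k hki
          show (if i = k then (1:F) else if k = Fin.last s' ∧ i ≠ Fin.last s' then _ else 0) = 0
          rw [if_neg (ne_of_gt hki), if_neg ?_]
          rintro ⟨rfl, _⟩
          exact absurd hki (not_lt.mpr (Fin.le_last i))
        · intro i
          show (if i = i then (1:F) else _) = 1
          rw [if_pos rfl]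
      have hY : ∀ i j, (C0 * (X * B0)) i j
          = (X * B0) i j
            + (if i ≠ Fin.last s' then (-((X * B0) i j0) / c) * (X * B0) (Fin.last s') j
                else 0) := by
        intro i j
        rw [Matrix.mul_apply]
        have e : ∀ k : Fin (s' + 1), C0 i k * (X * B0) k j
            = (if k = i then (X * B0) k j else 0)
              + (if k = Fin.last s' then
                  (if i ≠ Fin.last s' then (-((X * B0) i j0) / c) * (X * B0) k j else 0)
                  else 0) := by
          intro k
          show (if i = k then (1:F) else if k = Fin.last s' ∧ i ≠ Fin.last s' then _ else 0)
              * (X * B0) k j = _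
          by_cases h1 : k = i
          · subst h1
            rw [if_pos rfl, if_pos rfl, MulOneClass.one_mul]
            by_cases h2 : k = Fin.last s'
            · rw [if_pos h2, if_neg (fun hh => hh h2), add_zero]
            · rw [if_neg h2, add_zero]
          · rw [if_neg (fun hh => h1 hh.symm), if_neg h1, zero_add]
            by_cases h2 : k = Fin.last s'
            · subst h2
              have hi' : i ≠ Fin.last s' := fun hh => h1 hh.symm
              rw [if_pos ⟨rfl, hi'⟩, if_pos rfl, if_pos hi']
            · rw [if_neg (fun hh => h2 hh.1), if_neg h2, MulZeroClass.zero_mul]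
        rw [Finset.sum_congr rfl fun k _ => e k, Finset.sum_add_distrib,
          Finset.sum_ite_eq' Finset.univ i (fun k => (X * B0) k j),
          Finset.sum_ite_eq' Finset.univ (Fin.last s')
            (fun k => if i ≠ Fin.last s' then (-((X * B0) i j0) / c) * (X * B0) k j else 0),
          if_pos (Finset.mem_univ i), if_pos (Finset.mem_univ (Fin.last s'))]
      have hYlast : ∀ j, (C0 * (X * B0)) (Fin.last s') j = if j = j0 then c else 0 := by
        intro j
        rw [hY, if_neg (fun hh => hh rfl), add_zero, hrowB0]
      have hYj0 : ∀ i, i ≠ Fin.last s' → (C0 * (X * B0)) i j0 = 0 := by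
        intro i hi
        rw [hY, if_pos hi, hrowB0, if_pos rfl, div_mul_cancel₀ _ hc, add_neg_cancel]
      have hYZ : ∀ j ∈ Z, ∀ i, (C0 * (X * B0)) i j = 0 := by
        intro j hj i
        rw [hY, hZB0 j hj i, hZB0 j hj (Fin.last s'), MulZeroClass.mul_zero]
        simp
      -- recurse on the first s' rows
      have hZ' : ∀ j ∈ insert j0 Z, ∀ i', ((C0 * (X * B0)).submatrix Fin.castSucc id) i' j = 0 := by
        intro j hj i'
        rcases Set.mem_insert_iff.mp hj with rfl | hj'
        · exact hYj0 (Fin.castSucc i') (Fin.castSucc_lt_last i').ne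
        · exact hYZ j hj' (Fin.castSucc i')
      obtain ⟨C', B1, hC', hB1, hB1Z, hq⟩ :=
        ih ((C0 * (X * B0)).submatrix Fin.castSucc id) (insert j0 Z) hZ'
      refine ⟨extC C' * C0, B0 * B1, (extC_unitri hC').mul hC0tri, hB0tri.mul hB1, ?_, ?_⟩
      · -- the product B0 * B1 is still trivial on Z
        intro m j hmj hZmj
        rw [Matrix.mul_apply]
        apply Finset.sum_eq_zero
        intro k _
        rcases hZmj with hm | hj
        · by_cases hk : k = m
          · subst hk
            rw [hB1Z k j hmj (Or.inl (Set.mem_insert_of_mem _ hm)), MulZeroClass.mul_zero]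
          · rw [hB0Z m k (fun hh => hk hh.symm) (Or.inl hm), MulZeroClass.zero_mul]
        · by_cases hk : k = j
          · subst hk
            rw [hB0Z m k hmj (Or.inr hj), MulZeroClass.zero_mul]
          · rw [hB1Z k j hk (Or.inr (Set.mem_insert_of_mem _ hj)), MulZeroClass.mul_zero]
      · -- quasimonomiality of the result
        have hassoc : extC C' * C0 * X * (B0 * B1) = extC C' * (C0 * (X * B0)) * B1 := by
          simp only [Matrix.mul_assoc]
        rw [hassoc]
        set Y : Matrix (Fin (s' + 1)) (Fin t) F := C0 * (X * B0) with hYdef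
        set M : Matrix (Fin s') (Fin t) F := C' * Y.submatrix Fin.castSucc id * B1 with hMdef
        have hTrow : ∀ (i' : Fin s') j, (extC C' * Y * B1) (Fin.castSucc i') j = M i' j := by
          intro i' j
          rw [hMdef, Matrix.mul_apply, Matrix.mul_apply]
          exact Finset.sum_congr rfl fun m _ => by rw [extC_mul_castSucc]
        have hTlast : ∀ j, (extC C' * Y * B1) (Fin.last s') j = if j = j0 then c else 0 := by
          intro j
          rw [Matrix.mul_apply]
          have e : ∀ m : Fin t, (extC C' * Y) (Fin.last s') m * B1 m j
              = if m = j0 then c * B1 m j else 0 := by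
            intro m
            rw [extC_mul_last, hYlast]
            by_cases h : m = j0
            · rw [if_pos h, if_pos h]
            · rw [if_neg h, if_neg h, MulZeroClass.zero_mul]
          rw [Finset.sum_congr rfl fun m _ => e m,
            Finset.sum_ite_eq' Finset.univ j0 (fun m => c * B1 m j),
            if_pos (Finset.mem_univ j0)]
          by_cases h : j = j0
          · subst h
            rw [hB1.2, MulOneClass.mul_one, if_pos rfl]
          · rw [hB1Z j0 j (fun hh => h hh.symm) (Or.inl (Set.mem_insert _ _)),
              MulZeroClass.mul_zero, if_neg h]
        have hMj0 : ∀ i', M i' j0 = 0 := by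
          intro i'
          rw [hMdef, Matrix.mul_apply]
          apply Finset.sum_eq_zero
          intro m _
          by_cases hm : m = j0
          · subst hm
            rw [Matrix.mul_apply]
            rw [Finset.sum_eq_zero fun k _ => by
              rw [Matrix.submatrix_apply, id, hYj0 (Fin.castSucc k) (Fin.castSucc_lt_last k).ne,
                MulZeroClass.mul_zero]]
            rw [MulZeroClass.zero_mul]
          · rw [hB1Z m j0 hm (Or.inr (Set.mem_insert _ _)), MulZeroClass.mul_zero]
        constructor
        · intro i j j' hj hj'
          rcases Fin.eq_castSucc_or_eq_last i with ⟨a, rfl⟩ | rfl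
          · rw [hTrow] at hj hj'
            exact hq.1 a j j' hj hj'
          · rw [hTlast] at hj hj'
            by_cases h : j = j0
            · by_cases h' : j' = j0
              · rw [h, h']
              · rw [if_neg h'] at hj'
                exact absurd rfl hj'
            · rw [if_neg h] at hj
              exact absurd rfl hj
        · intro i i' j hi hi'
          rcases Fin.eq_castSucc_or_eq_last i with ⟨a, rfl⟩ | rfl
          · rcases Fin.eq_castSucc_or_eq_last i' with ⟨b, rfl⟩ | rfl
            · rw [hTrow] at hi hi'
              rw [hq.2 a b j hi hi']
            · rw [hTlast] at hi'
              by_cases h : j = j0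
              · subst h
                rw [hTrow, hMj0] at hi
                exact absurd rfl hi
              · rw [if_neg h] at hi'
                exact absurd rfl hi'
          · rcases Fin.eq_castSucc_or_eq_last i' with ⟨b, rfl⟩ | rfl
            · rw [hTlast] at hi
              by_cases h : j = j0
              · subst h
                rw [hTrow, hMj0] at hi'
                exact absurd rfl hi'
              · rw [if_neg h] at hi
                exact absurd rfl hi
            · rfl

end Exist

/-- Every orbit of `U_s × U_t` acting on `s × t` matrices by `X^(A,B) = A⁻¹XB` contains a
unique quasimonomial matrix. -/
theorem stmt_0 (p q : ℕ) (hp : p.Prime) (hpq : ∃ m : ℕ, 0 < m ∧ q = p ^ m)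
    (F : Type) [Field F] [Fintype F] (hF : Fintype.card F = q)
    (s t : ℕ) (hs : 1 ≤ s) (ht : 1 ≤ t) (X : Matrix (Fin s) (Fin t) F) :
    ∃! T : Matrix (Fin s) (Fin t) F, Quasimonomial T ∧
      ∃ (A : UT F s) (B : UT F t),
        T = (((A⁻¹ : UT F s) : GL (Fin s) F) : Matrix (Fin s) (Fin s) F) * X *
          ((B : GL (Fin t) F) : Matrix (Fin t) (Fin t) F) := by
  classical
  obtain ⟨C, Bm, hC, hBm, -, hq⟩ := quasi_exist s X (∅ : Set (Fin t)) (by simp)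
  have hdetC : C.det ≠ 0 := by
    rw [Matrix.det_of_upperTriangular (show C.BlockTriangular id from fun i j h => hC.1 i j h),
      Finset.prod_eq_one fun i _ => hC.2 i]
    exact one_ne_zero
  have hdetB : Bm.det ≠ 0 := by
    rw [Matrix.det_of_upperTriangular (show Bm.BlockTriangular id from fun i j h => hBm.1 i j h),
      Finset.prod_eq_one fun i _ => hBm.2 i]
    exact one_ne_zero
  set Cg : GL (Fin s) F := Matrix.GeneralLinearGroup.mkOfDetNeZero C hdetC with hCgdef
  set Bg : GL (Fin t) F := Matrix.GeneralLinearGroup.mkOfDetNeZero Bm hdetB with hBgdef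
  have hCg : ((Cg : GL (Fin s) F) : Matrix (Fin s) (Fin s) F) = C := rfl
  have hBg : ((Bg : GL (Fin t) F) : Matrix (Fin t) (Fin t) F) = Bm := rfl
  have hCmem : Cg ∈ UT F s := by
    show IsUnitriangular ((Cg : Matrix (Fin s) (Fin s) F))
    rw [hCg]; exact hC
  have hBmem : Bg ∈ UT F t := by
    show IsUnitriangular ((Bg : Matrix (Fin t) (Fin t) F))
    rw [hBg]; exact hBm
  set A0 : UT F s := ⟨Cg, hCmem⟩ with hA0def
  set B0 : UT F t := ⟨Bg, hBmem⟩ with hB0def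
  refine ⟨C * X * Bm, ⟨hq, A0⁻¹, B0, ?_⟩, ?_⟩
  · rw [inv_inv]; rfl
  · rintro T' ⟨hq', A', B', rfl⟩
    have hCm : IsUnitriangular
        ((((A'⁻¹ * A0⁻¹ : UT F s) : GL (Fin s) F)) : Matrix (Fin s) (Fin s) F) :=
      (A'⁻¹ * A0⁻¹ : UT F s).2
    have hDm : IsUnitriangular
        ((((B0⁻¹ * B' : UT F t) : GL (Fin t) F)) : Matrix (Fin t) (Fin t) F) :=
      (B0⁻¹ * B' : UT F t).2
    have h1 : ((((A0⁻¹ : UT F s) : GL (Fin s) F)) : Matrix (Fin s) (Fin s) F) * C = 1 := by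
      rw [show C = (((A0 : UT F s) : GL (Fin s) F) : Matrix (Fin s) (Fin s) F) from rfl,
        show (((A0⁻¹ : UT F s) : GL (Fin s) F) : Matrix (Fin s) (Fin s) F)
          = (((A0 : UT F s) : GL (Fin s) F)⁻¹ : GL (Fin s) F).val from rfl,
        ← Units.val_mul, inv_mul_cancel, Units.val_one]
    have h2 : Bm * ((((B0⁻¹ : UT F t) : GL (Fin t) F)) : Matrix (Fin t) (Fin t) F) = 1 := by
      rw [show Bm = (((B0 : UT F t) : GL (Fin t) F) : Matrix (Fin t) (Fin t) F) from rfl,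
        show (((B0⁻¹ : UT F t) : GL (Fin t) F) : Matrix (Fin t) (Fin t) F)
          = (((B0 : UT F t) : GL (Fin t) F)⁻¹ : GL (Fin t) F).val from rfl,
        ← Units.val_mul, mul_inv_cancel, Units.val_one]
    have hrep : (((A'⁻¹ : UT F s) : GL (Fin s) F) : Matrix (Fin s) (Fin s) F) * X *
          (((B' : UT F t) : GL (Fin t) F) : Matrix (Fin t) (Fin t) F)
        = (((A'⁻¹ * A0⁻¹ : UT F s) : GL (Fin s) F) : Matrix (Fin s) (Fin s) F)
            * (C * X * Bm)
            * (((B0⁻¹ * B' : UT F t) : GL (Fin t) F) : Matrix (Fin t) (Fin t) F) := by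
      show _ = ((((A'⁻¹ : UT F s) : GL (Fin s) F) : Matrix (Fin s) (Fin s) F)
          * (((A0⁻¹ : UT F s) : GL (Fin s) F) : Matrix (Fin s) (Fin s) F))
          * (C * X * Bm)
          * ((((B0⁻¹ : UT F t) : GL (Fin t) F) : Matrix (Fin t) (Fin t) F)
            * (((B' : UT F t) : GL (Fin t) F) : Matrix (Fin t) (Fin t) F))
      set a' := (((A'⁻¹ : UT F s) : GL (Fin s) F) : Matrix (Fin s) (Fin s) F)
      set ainv := (((A0⁻¹ : UT F s) : GL (Fin s) F) : Matrix (Fin s) (Fin s) F)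
      set binv := (((B0⁻¹ : UT F t) : GL (Fin t) F) : Matrix (Fin t) (Fin t) F)
      set b' := (((B' : UT F t) : GL (Fin t) F) : Matrix (Fin t) (Fin t) F)
      calc a' * X * b'
          = a' * ((ainv * C) * X * (Bm * binv)) * b' := by
            rw [h1, h2, Matrix.one_mul, Matrix.mul_one]
        _ = (a' * ainv) * (C * X * Bm) * (binv * b') := by
            simp only [Matrix.mul_assoc]
    have hq2 : Quasimonomial
        ((((A'⁻¹ * A0⁻¹ : UT F s) : GL (Fin s) F) : Matrix (Fin s) (Fin s) F)
          * (C * X * Bm)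
          * (((B0⁻¹ * B' : UT F t) : GL (Fin t) F) : Matrix (Fin t) (Fin t) F)) := by
      rw [← hrep]; exact hq'
    rw [hrep]
    exact quasi_uniq (s + t) s t le_rfl _ _ _ hCm hDm hq hq2
end

section
/- Let m ≥ 3 and let the group P_{m,2} act on the space F^m of column vectors of length m over F by v^X = X⁻¹v for X ∈ P_{m,2}. Let v ∈ F^m be nonzero and let k be the largest index with v_k ≠ 0. If k ≤ 2 then v is fixed by P_{m,2} (its orbit is {v}); if k ≥ 3 then the orbit of v is exactly {w ∈ F^m : w_k = v_k, w_i = 0 for all i > k}, which has size q^{k−1}. In particular, every orbit of P_{m,2} on F^m has size either 1 or at least q². -/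
open Matrix

/-- The orbit of a column vector `v` under the action `v ^ X = X⁻¹ v` of `P_(m,2)`. -/
def Porbit (F : Type) [Field F] (m : ℕ) (v : Fin m → F) : Set (Fin m → F) :=
  {w | ∃ X : Pcol F m 2,
    w = Matrix.mulVec (((X⁻¹ : Pcol F m 2) : GL (Fin m) F) : Matrix (Fin m) (Fin m) F) v}


section Aux

variable {F : Type} [Field F] {m : ℕ}

lemma uni_mulVec_fix {A : Matrix (Fin m) (Fin m) F} (hA : IsUnitriangular A)
    {u : Fin m → F} {k : Fin m} (hkmax : ∀ l, k < l → u l = 0) :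
    A.mulVec u k = u k ∧ ∀ l, k < l → A.mulVec u l = 0 := by
  constructor
  · rw [Matrix.mulVec, dotProduct, Finset.sum_eq_single k]
    · rw [hA.2, one_mul]
    · intro j _ hj
      rcases lt_or_gt_of_ne hj with h | h
      · rw [hA.1 k j h, zero_mul]
      · rw [hkmax j h, mul_zero]
    · intro h; exact absurd (Finset.mem_univ k) h
  · intro l hl
    rw [Matrix.mulVec, dotProduct]
    apply Finset.sum_eq_zero
    intro j _
    rcases lt_or_ge j l with h | h
    · rw [hA.1 l j h, zero_mul]
    · rw [hkmax j (lt_of_lt_of_le hl h), mul_zero]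

lemma pcol_fix {A : GL (Fin m) F} (hA : A ∈ Pcol F m 2)
    {u : Fin m → F} {k : Fin m} (hk2 : (k : ℕ) ≤ 1) (hkmax : ∀ l, k < l → u l = 0) :
    (A : Matrix (Fin m) (Fin m) F).mulVec u = u := by
  funext i
  rw [Matrix.mulVec, dotProduct, Finset.sum_eq_single i]
  · rw [hA.1.2, one_mul]
  · intro j _ hj
    rcases lt_or_gt_of_ne hj with h | h
    · -- j > i? no: h : j < i
      rw [hA.1.1 i j h, zero_mul]
    · -- h : j > i, i.e. i < j
      rcases lt_or_ge k j with h2 | h2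
      · rw [hkmax j h2, mul_zero]
      · have hj1 : (j : ℕ) = 1 := by
          have h2' : (j : ℕ) ≤ (k : ℕ) := h2
          have h' : (i : ℕ) < (j : ℕ) := h
          omega
        rw [hA.2 i j (by omega) h, zero_mul]
  · intro h; exact absurd (Finset.mem_univ i) h

lemma self_mem_porbit (u : Fin m → F) : u ∈ Porbit F m u := by
  refine ⟨1, ?_⟩
  rw [inv_one]
  show u = Matrix.mulVec (((1 : Pcol F m 2) : GL (Fin m) F) : Matrix (Fin m) (Fin m) F) u
  rw [OneMemClass.coe_one, Units.val_one, Matrix.one_mulVec]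

lemma porbit_eq_singleton {u : Fin m → F} {k : Fin m} (hk2 : (k : ℕ) ≤ 1)
    (hkmax : ∀ l, k < l → u l = 0) : Porbit F m u = {u} := by
  apply Set.eq_singleton_iff_unique_mem.mpr
  refine ⟨self_mem_porbit u, ?_⟩
  rintro w ⟨X, rfl⟩
  exact pcol_fix (X⁻¹).2 hk2 hkmax

lemma exists_porbit_mem {u w : Fin m → F} {k : Fin m} (hk : u k ≠ 0) (hk2 : 2 ≤ (k : ℕ))
    (hkmax : ∀ l, k < l → u l = 0) (hwk : w k = u k) (hwmax : ∀ l, k < l → w l = 0) :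
    w ∈ Porbit F m u := by
  set c : Fin m → F := fun i => if (i : ℕ) < (k : ℕ) then (w i - u i) / u k else 0 with hc
  have hck : c k = 0 := by simp [hc]
  set E : Matrix (Fin m) (Fin m) F := Matrix.of (fun i j => if j = k then c i else 0) with hE
  have hEE : E * E = 0 := by
    ext i j
    rw [Matrix.mul_apply]
    apply Finset.sum_eq_zero
    intro l _
    by_cases hl : l = k
    · subst hl
      have : E l j = 0 := by simp [hE, hck]
      rw [this, mul_zero]
    · have : E i l = 0 := by simp [hE, hl]
      rw [this, zero_mul]
  have h1 : (1 + E) * (1 - E) = 1 := by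
    have h : (1 + E) * (1 - E) = 1 - E * E := by noncomm_ring
    rw [h, hEE, sub_zero]
  have h2 : (1 - E) * (1 + E) = 1 := by
    have h : (1 - E) * (1 + E) = 1 - E * E := by noncomm_ring
    rw [h, hEE, sub_zero]
  set X0 : GL (Fin m) F := ⟨1 + E, 1 - E, h1, h2⟩ with hX0
  have hX0val : (X0 : Matrix (Fin m) (Fin m) F) = 1 + E := rfl
  have hczero : ∀ i : Fin m, ¬ (i : ℕ) < (k : ℕ) → c i = 0 := fun i h => if_neg h
  have hEapply : ∀ i j : Fin m, E i j = if j = k then c i else 0 := fun _ _ => rfl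
  have hmem : X0 ∈ Pcol F m 2 := by
    refine ⟨⟨?_, ?_⟩, ?_⟩
    · intro i j hij
      rw [hX0val, Matrix.add_apply, Matrix.one_apply_ne (ne_of_gt hij), hEapply, zero_add]
      have h' : (j : ℕ) < (i : ℕ) := hij
      by_cases hjk : j = k
      · subst hjk
        rw [if_pos rfl]
        exact hczero i (by omega)
      · rw [if_neg hjk]
    · intro i
      rw [hX0val, Matrix.add_apply, Matrix.one_apply_eq, hEapply]
      by_cases hik : i = k
      · subst hik
        rw [if_pos rfl, hck, add_zero]
      · rw [if_neg hik, add_zero]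
    · intro r c' hc' hr
      rw [hX0val, Matrix.add_apply, Matrix.one_apply_ne (ne_of_lt hr), hEapply, zero_add]
      rw [if_neg]
      intro h
      subst h
      omega
  have hMv : (1 + E).mulVec u = w := by
    funext i
    rw [Matrix.add_mulVec, Matrix.one_mulVec]
    have hEv : E.mulVec u i = c i * u k := by
      rw [Matrix.mulVec, dotProduct, Finset.sum_eq_single k]
      · simp [hE]
      · intro j _ hj
        have : E i j = 0 := by simp [hE, hj]
        rw [this, zero_mul]
      · intro h; exact absurd (Finset.mem_univ k) h
    rw [Pi.add_apply, hEv]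
    rcases lt_trichotomy (i : ℕ) (k : ℕ) with h | h | h
    · rw [hc]
      simp only [if_pos h]
      rw [div_mul_cancel₀ _ hk]
      ring
    · have : i = k := Fin.ext h
      subst this
      rw [hck, zero_mul, add_zero, hwk]
    · have hik : k < i := h
      rw [hkmax i hik, hwmax i hik, hczero i (by omega), zero_mul, add_zero]
  refine ⟨⟨X0⁻¹, (Pcol F m 2).inv_mem hmem⟩, ?_⟩
  have : ((⟨X0⁻¹, (Pcol F m 2).inv_mem hmem⟩ : Pcol F m 2)⁻¹ : Pcol F m 2) =
      ⟨X0, hmem⟩ := by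
    apply Subtype.ext
    simp
  rw [this]
  exact hMv.symm

lemma porbit_eq_set {u : Fin m → F} {k : Fin m} (hk : u k ≠ 0) (hk2 : 2 ≤ (k : ℕ))
    (hkmax : ∀ l, k < l → u l = 0) :
    Porbit F m u = {w : Fin m → F | w k = u k ∧ ∀ l : Fin m, k < l → w l = 0} := by
  apply Set.Subset.antisymm
  · rintro w ⟨X, rfl⟩
    exact uni_mulVec_fix (X⁻¹).2.1 hkmax
  · rintro w ⟨hwk, hwmax⟩
    exact exists_porbit_mem hk hk2 hkmax hwk hwmax

def SEquiv (F : Type) [Field F] (m : ℕ) (u : Fin m → F) (k : Fin m) :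
    {w : Fin m → F | w k = u k ∧ ∀ l : Fin m, k < l → w l = 0} ≃ (Fin (k : ℕ) → F) where
  toFun w i := w.1 ⟨i.1, i.2.trans k.2⟩
  invFun f := ⟨fun l => if h : (l : ℕ) < (k : ℕ) then f ⟨l.1, h⟩
      else if l = k then u k else 0, by
    constructor
    · simp
    · intro l hl
      dsimp only
      rw [dif_neg (by omega : ¬ (l : ℕ) < (k : ℕ)), if_neg (ne_of_gt hl)]⟩
  left_inv w := by
    apply Subtype.ext
    funext l
    dsimp only
    by_cases h : (l : ℕ) < (k : ℕ)
    · simp only [dif_pos h]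
    · rw [dif_neg h]
      by_cases h2 : l = k
      · subst h2
        rw [if_pos rfl, w.2.1]
      · rw [if_neg h2]
        have : k < l := by
          have := Fin.val_ne_of_ne h2
          omega
        exact (w.2.2 l this).symm
  right_inv f := by
    funext i
    dsimp only
    simp only [dif_pos i.2]

lemma card_porbit_set (F : Type) [Field F] [Fintype F] (m : ℕ) (u : Fin m → F) (k : Fin m) :
    Set.ncard {w : Fin m → F | w k = u k ∧ ∀ l : Fin m, k < l → w l = 0}
      = Fintype.card F ^ (k : ℕ) := by
  rw [← Nat.card_coe_set_eq, Nat.card_congr (SEquiv F m u k),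
    Nat.card_eq_fintype_card, Fintype.card_fun, Fintype.card_fin]

end Aux

theorem stmt_14 (p q : ℕ) (hp : p.Prime) (hpq : ∃ m : ℕ, 0 < m ∧ q = p ^ m)
    (F : Type) [Field F] [Fintype F] (hF : Fintype.card F = q)
    (m : ℕ) (hm : 3 ≤ m) (v : Fin m → F) (hv : v ≠ 0)
    (k : Fin m) (hk : v k ≠ 0) (hkmax : ∀ l : Fin m, k < l → v l = 0) :
    ((k : ℕ) + 1 ≤ 2 → Porbit F m v = {v}) ∧
    (3 ≤ (k : ℕ) + 1 →
      Porbit F m v = {w : Fin m → F | w k = v k ∧ ∀ l : Fin m, k < l → w l = 0} ∧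
      Set.ncard (Porbit F m v) = q ^ (k : ℕ)) ∧
    (∀ u : Fin m → F, Set.ncard (Porbit F m u) = 1 ∨ q ^ 2 ≤ Set.ncard (Porbit F m u)) := by
  classical
  have hq1 : 1 ≤ q := by
    have := Fintype.card_pos (α := F)
    omega
  refine ⟨?_, ?_, ?_⟩
  · intro h
    exact porbit_eq_singleton (by omega) hkmax
  · intro h
    have hk2 : 2 ≤ (k : ℕ) := by omega
    refine ⟨porbit_eq_set hk hk2 hkmax, ?_⟩
    rw [porbit_eq_set hk hk2 hkmax, card_porbit_set, hF]
  · intro u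
    by_cases hu : u = 0
    · subst hu
      left
      have : Porbit F m (0 : Fin m → F) = {0} := by
        apply Set.eq_singleton_iff_unique_mem.mpr
        refine ⟨self_mem_porbit 0, ?_⟩
        rintro w ⟨X, rfl⟩
        exact Matrix.mulVec_zero _
      rw [this, Set.ncard_singleton]
    · have hne : (Finset.univ.filter (fun i => u i ≠ 0)).Nonempty := by
        rw [Finset.filter_nonempty_iff]
        push_neg at hu
        obtain ⟨i, hi⟩ := Function.ne_iff.mp hu
        exact ⟨i, Finset.mem_univ i, hi⟩
      set k' := (Finset.univ.filter (fun i => u i ≠ 0)).max' hne with hk'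
      have hku : u k' ≠ 0 := by
        have := Finset.max'_mem _ hne
        rw [Finset.mem_filter] at this
        exact this.2
      have hkmax' : ∀ l, k' < l → u l = 0 := by
        intro l hl
        by_contra hul
        have : l ∈ Finset.univ.filter (fun i => u i ≠ 0) := by
          rw [Finset.mem_filter]; exact ⟨Finset.mem_univ l, hul⟩
        exact absurd (Finset.le_max' _ l this) (not_le.mpr hl)
      rcases le_or_gt (k' : ℕ) 1 with h | h
      · left
        rw [porbit_eq_singleton h hkmax', Set.ncard_singleton]
      · right
        have hk2 : 2 ≤ (k' : ℕ) := h
        rw [porbit_eq_set hku hk2 hkmax', card_porbit_set, hF]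
        exact Nat.pow_le_pow_right hq1 hk2
end

section
/- Let n ≥ 2 and let U_{n−1} act on the space F^{(n−1)×1} of column vectors of length n−1 over F by D^A = A⁻¹D for A ∈ U_{n−1}. For every nonzero f ∈ F and every 1 ≤ i ≤ n−1, the orbit of the vector f·E_{i,1} (the vector with entry f in position i and 0 elsewhere) under this action has size q^{i−1}, and the stabilizer of f·E_{i,1} in U_{n−1} is exactly P_{n−1,i}. -/
open Matrix

section Stmt19Aux

variable {F : Type} [Field F]

private lemma mulVec_std {m : ℕ} (B : Matrix (Fin m) (Fin m) F) (f : F) (i k : Fin m) :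
    B.mulVec (fun l => if l = i then f else 0) k = B k i * f := by
  classical
  simp [Matrix.mulVec, dotProduct, mul_ite, mul_zero]

/-- Construction: for any `w` with `w i = f` and `w k = 0` for `k > i`, there is a
unitriangular element whose `i`-th column times `f` is `w`. -/
private lemma exists_ut {m : ℕ} (f : F) (hf : f ≠ 0) (i : Fin m) (w : Fin m → F)
    (hwi : w i = f) (hw : ∀ k : Fin m, i < k → w k = 0) :
    ∃ A : UT F m,
      w = Matrix.mulVec (((A⁻¹ : UT F m) : GL (Fin m) F) : Matrix (Fin m) (Fin m) F)
        (fun l => if l = i then f else 0) := by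
  classical
  set C : Matrix (Fin m) (Fin m) F :=
    fun k l => if l = i ∧ k ≠ i then w k / f else 0 with hC
  have hC2 : C * C = 0 := by
    ext k l
    rw [Matrix.mul_apply]
    apply Finset.sum_eq_zero
    intro x _
    by_cases hx : x = i
    · subst hx
      have : C x l = 0 := by simp [hC]
      rw [this, mul_zero]
    · have : C k x = 0 := by simp [hC, hx]
      rw [this, zero_mul]
  have hmul1 : (1 + C) * (1 - C) = 1 := by
    rw [mul_sub, mul_one, add_mul, one_mul, hC2, add_zero, add_sub_cancel_right]
  have hmul2 : (1 - C) * (1 + C) = 1 := by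
    rw [sub_mul, one_mul, mul_add, mul_one, hC2, add_zero, add_sub_cancel_right]
  set Bu : GL (Fin m) F := ⟨1 + C, 1 - C, hmul1, hmul2⟩ with hBu
  have hCkl : ∀ k l : Fin m, l < k → C k l = 0 := by
    intro k l hlt
    by_cases hl : l = i ∧ k ≠ i
    · have : w k = 0 := hw k (hl.1 ▸ hlt)
      simp [hC, hl, this]
    · simp [hC, hl]
  have hutri : IsUnitriangular ((Bu : GL (Fin m) F) : Matrix (Fin m) (Fin m) F) := by
    constructor
    · intro k l hlt
      show (1 + C) k l = 0
      rw [Matrix.add_apply, Matrix.one_apply_ne (ne_of_gt hlt), hCkl k l hlt, add_zero]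
    · intro k
      show (1 + C) k k = 1
      have : C k k = 0 := by
        by_cases hk : k = i <;> simp [hC, hk]
      rw [Matrix.add_apply, Matrix.one_apply_eq, this, add_zero]
  refine ⟨(⟨Bu, hutri⟩ : UT F m)⁻¹, ?_⟩
  rw [inv_inv]
  funext k
  rw [mulVec_std]
  show w k = (1 + C) k i * f
  by_cases hk : k = i
  · subst hk
    have : C k k = 0 := by simp [hC]
    rw [Matrix.add_apply, Matrix.one_apply_eq, this, add_zero, one_mul, hwi]
  · have h1 : (1 : Matrix (Fin m) (Fin m) F) k i = 0 := Matrix.one_apply_ne hk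
    have h2 : C k i = w k / f := by simp [hC, hk]
    rw [Matrix.add_apply, h1, h2, zero_add, div_mul_cancel₀ _ hf]

private lemma orbit_eq {m : ℕ} (f : F) (hf : f ≠ 0) (i : Fin m) :
    {w : Fin m → F | ∃ A : UT F m,
        w = Matrix.mulVec (((A⁻¹ : UT F m) : GL (Fin m) F) : Matrix (Fin m) (Fin m) F)
          (fun l => if l = i then f else 0)}
    = {w : Fin m → F | w i = f ∧ ∀ k : Fin m, i < k → w k = 0} := by
  ext w
  constructor
  · rintro ⟨A, rfl⟩
    set B := (((A⁻¹ : UT F m) : GL (Fin m) F) : Matrix (Fin m) (Fin m) F) with hB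
    have hBt : IsUnitriangular B := (A⁻¹ : UT F m).2
    constructor
    · show Matrix.mulVec B (fun l => if l = i then f else 0) i = f
      rw [mulVec_std, hBt.2, one_mul]
    · intro k hk
      show Matrix.mulVec B (fun l => if l = i then f else 0) k = 0
      rw [mulVec_std, hBt.1 k i hk, zero_mul]
  · rintro ⟨h1, h2⟩
    exact exists_ut f hf i w h1 h2

private lemma orbit_card {m : ℕ} [Fintype F] (f : F) (i : Fin m) :
    Set.ncard {w : Fin m → F | w i = f ∧ ∀ k : Fin m, i < k → w k = 0}
      = Fintype.card F ^ (i : ℕ) := by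
  classical
  set S := {w : Fin m → F | w i = f ∧ ∀ k : Fin m, i < k → w k = 0} with hS
  have e : S ≃ (Fin (i : ℕ) → F) := by
    refine
      { toFun := fun w j => w.1 ⟨j, lt_trans j.2 i.2⟩
        invFun := fun a => ⟨fun k => if h : (k : ℕ) < (i : ℕ) then a ⟨k, h⟩
          else if k = i then f else 0, ?_, ?_⟩
        left_inv := ?_
        right_inv := ?_ }
    · simp
    · intro k hk
      have h1 : ¬ ((k : ℕ) < (i : ℕ)) := not_lt.2 (le_of_lt (Fin.lt_def.1 hk))
      have h2 : k ≠ i := (ne_of_gt hk)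
      simp [h1, h2]
    · rintro ⟨w, hw1, hw2⟩
      apply Subtype.ext
      funext k
      simp only
      by_cases h : (k : ℕ) < (i : ℕ)
      · rw [dif_pos h]
      · rw [dif_neg h]
        by_cases hk : k = i
        · rw [if_pos hk, hk, hw1]
        · rw [if_neg hk]
          have hne : (k : ℕ) ≠ (i : ℕ) := fun h' => hk (Fin.ext h')
          have hlt : i < k := Fin.lt_def.2 (by omega)
          exact (hw2 k hlt).symm
    · intro a
      funext j
      simp only
      rw [dif_pos (show ((⟨(j : ℕ), lt_trans j.2 i.2⟩ : Fin m) : ℕ) < (i : ℕ) from j.2)]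
  rw [← Nat.card_coe_set_eq, Nat.card_congr e, Nat.card_eq_fintype_card]
  simp

private lemma stab_iff {m : ℕ} (f : F) (hf : f ≠ 0) (i : Fin m) (A : UT F m) :
    Matrix.mulVec (((A⁻¹ : UT F m) : GL (Fin m) F) : Matrix (Fin m) (Fin m) F)
      (fun l => if l = i then f else 0) = (fun l => if l = i then f else 0)
    ↔ (A : GL (Fin m) F) ∈ Pcol F m ((i : ℕ) + 1) := by
  classical
  set v : Fin m → F := fun l => if l = i then f else 0 with hv
  have hcoe : (((A⁻¹ : UT F m) : GL (Fin m) F) : Matrix (Fin m) (Fin m) F)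
      = (((A : GL (Fin m) F)⁻¹ : GL (Fin m) F) : Matrix (Fin m) (Fin m) F) := by
    norm_cast
  have hAv_iff : Matrix.mulVec (((A⁻¹ : UT F m) : GL (Fin m) F) : Matrix (Fin m) (Fin m) F) v = v
      ↔ Matrix.mulVec ((A : GL (Fin m) F) : Matrix (Fin m) (Fin m) F) v = v := by
    rw [hcoe]
    constructor
    · intro h
      conv_lhs => rw [← h]
      rw [Matrix.mulVec_mulVec, ← Units.val_mul, mul_inv_cancel, Units.val_one,
        Matrix.one_mulVec]
    · intro h
      conv_lhs => rw [← h]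
      rw [Matrix.mulVec_mulVec, ← Units.val_mul, inv_mul_cancel, Units.val_one,
        Matrix.one_mulVec]
  rw [hAv_iff]
  have hAt : IsUnitriangular ((A : GL (Fin m) F) : Matrix (Fin m) (Fin m) F) := A.2
  constructor
  · intro h
    refine ⟨hAt, ?_⟩
    intro k c hc hk
    have hci : c = i := Fin.ext (by omega)
    subst hci
    have := congrFun h k
    rw [mulVec_std] at this
    have hki : k ≠ c := ne_of_lt hk
    rw [hv] at this
    simp only [if_neg hki] at this
    rcases mul_eq_zero.1 this with h' | h'
    · exact h'
    · exact absurd h' hf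
  · rintro ⟨_, h2⟩
    funext k
    rw [mulVec_std]
    by_cases hk : k = i
    · subst hk
      rw [hAt.2, one_mul]
      show f = if k = k then f else 0
      rw [if_pos rfl]
    · rw [hv]
      simp only [if_neg hk]
      rw [trivial_col hAt (fun k' hk' => h2 k' i rfl hk') hk, zero_mul]

end Stmt19Aux

theorem stmt_19 (p q : ℕ) (hp : p.Prime) (hpq : ∃ m : ℕ, 0 < m ∧ q = p ^ m)
    (F : Type) [Field F] [Fintype F] (hF : Fintype.card F = q)
    (n : ℕ) (hn : 2 ≤ n) (f : F) (hf : f ≠ 0) (i : Fin (n - 1)) :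
    Set.ncard {w : Fin (n - 1) → F | ∃ A : UT F (n - 1),
        w = Matrix.mulVec
          (((A⁻¹ : UT F (n - 1)) : GL (Fin (n - 1)) F) : Matrix (Fin (n - 1)) (Fin (n - 1)) F)
          (fun l => if l = i then f else 0)} = q ^ (i : ℕ) ∧
    ∀ A : UT F (n - 1),
      (Matrix.mulVec
          (((A⁻¹ : UT F (n - 1)) : GL (Fin (n - 1)) F) : Matrix (Fin (n - 1)) (Fin (n - 1)) F)
          (fun l => if l = i then f else 0) = (fun l => if l = i then f else 0)
        ↔ (A : GL (Fin (n - 1)) F) ∈ Pcol F (n - 1) ((i : ℕ) + 1)) := by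
  constructor
  · rw [orbit_eq f hf i, orbit_card f i, hF]
  · intro A
    exact stab_iff f hf i A
end
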